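/- For the quadratic MSE objective J(F) = tr(F* A F) − 2 Re tr(F* B) with A Hermitian positive definite, subject to ‖F‖_F² ≤ ρ: if ‖A^{-1}B‖_F² ≤ ρ then F = A^{-1}B is the global minimizer; otherwise the minimizer is F = (A + μI)^{-1}B where μ > 0 is the unique value satisfying ‖(A+μI)^{-1}B‖_F² = ρ. -/

import Mathlib

open Matrix
open scoped ComplexOrder

/-- Squared Frobenius norm of a complex matrix. -/
noncomputable def frobSq {m n : ℕ} (A : Matrix (Fin m) (Fin n) ℂ) : ℝ :=
  ∑ i, ∑ j, Complex.normSq (A i j)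

lemma frobSq_eq_retrace {m n : ℕ} (F : Matrix (Fin m) (Fin n) ℂ) :
    frobSq F = ((Fᴴ * F).trace).re := by
  have key : ∀ z : ℂ, ((starRingEnd ℂ) z * z).re = Complex.normSq z := by
    intro z; rw [mul_comm, Complex.mul_conj, Complex.ofReal_re]
  simp only [frobSq, Matrix.trace, Matrix.diag, Matrix.mul_apply, Matrix.conjTranspose_apply,
    Complex.re_sum, RCLike.star_def, key]
  exact Finset.sum_comm

lemma diag_conj {m n : ℕ} (M : Matrix (Fin m) (Fin m) ℂ) (G : Matrix (Fin m) (Fin n) ℂ) (j : Fin n) :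
    (Gᴴ * M * G) j j = star (fun i => G i j) ⬝ᵥ (M *ᵥ fun i => G i j) := by
  simp only [Matrix.mul_apply, Matrix.conjTranspose_apply, dotProduct, Matrix.mulVec,
    dotProduct, Pi.star_apply, Finset.sum_mul, Finset.mul_sum]
  rw [Finset.sum_comm]
  congr 1; ext i; congr 1; ext k; ring

lemma retrace_nonneg {m n : ℕ} {M : Matrix (Fin m) (Fin m) ℂ} (hM : M.PosSemidef)
    (G : Matrix (Fin m) (Fin n) ℂ) : 0 ≤ ((Gᴴ * M * G).trace).re := by
  rw [Matrix.trace, Complex.re_sum]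
  refine Finset.sum_nonneg fun j _ => ?_
  rw [Matrix.diag, diag_conj]
  exact hM.re_dotProduct_nonneg _

lemma retrace_eq_zero {m n : ℕ} {M : Matrix (Fin m) (Fin m) ℂ} (hM : M.PosDef)
    (G : Matrix (Fin m) (Fin n) ℂ) (h : ((Gᴴ * M * G).trace).re = 0) : G = 0 := by
  by_contra hG
  obtain ⟨i, j, hij⟩ : ∃ i j, G i j ≠ 0 := by
    by_contra h'; push_neg at h'; exact hG (by ext i j; simp [h'])
  have hcol : (fun i => G i j) ≠ 0 := fun hc => hij (congrFun hc i)
  have : 0 < ((Gᴴ * M * G).trace).re := by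
    rw [Matrix.trace, Complex.re_sum]
    refine Finset.sum_pos' (fun k _ => ?_) ⟨j, Finset.mem_univ j, ?_⟩
    · rw [Matrix.diag, diag_conj]; exact hM.posSemidef.re_dotProduct_nonneg _
    · rw [Matrix.diag, diag_conj]; exact hM.re_dotProduct_pos hcol
  linarith

lemma posdef_shift {m : ℕ} {A : Matrix (Fin m) (Fin m) ℂ} (hA : A.PosDef) {μ : ℝ} (hμ : 0 ≤ μ) :
    (A + (μ : ℂ) • (1 : Matrix (Fin m) (Fin m) ℂ)).PosDef := by
  refine hA.add_posSemidef ?_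
  rw [Matrix.smul_one_eq_diagonal]
  exact Matrix.PosSemidef.diagonal fun i => Complex.zero_le_real.2 hμ

lemma re_trace_conjT {m n : ℕ} (X : Matrix (Fin m) (Fin n) ℂ) (Y : Matrix (Fin m) (Fin n) ℂ) :
    ((Yᴴ * X).trace).re = ((Xᴴ * Y).trace).re := by
  have : Yᴴ * X = (Xᴴ * Y)ᴴ := by simp [Matrix.conjTranspose_mul]
  rw [this, Matrix.trace_conjTranspose]
  exact Complex.conj_re _

/-- Core identity: J(F) - J(F₀) for F₀ = (A+μI)⁻¹B. -/
lemma core_identity {m n : ℕ} {A : Matrix (Fin m) (Fin m) ℂ} (hA : A.PosDef)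
    (B : Matrix (Fin m) (Fin n) ℂ) {μ : ℝ} (hμ : 0 ≤ μ) (F : Matrix (Fin m) (Fin n) ℂ) :
    (((Fᴴ * A * F).trace).re - 2 * ((Fᴴ * B).trace).re)
      - ((((A + (μ:ℂ) • 1)⁻¹ * B)ᴴ * A * ((A + (μ:ℂ) • 1)⁻¹ * B)).trace.re
          - 2 * ((((A + (μ:ℂ) • 1)⁻¹ * B)ᴴ * B).trace).re)
    = (((F - (A + (μ:ℂ) • 1)⁻¹ * B)ᴴ * (A + (μ:ℂ) • 1) * (F - (A + (μ:ℂ) • 1)⁻¹ * B)).trace).re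
      + μ * (frobSq ((A + (μ:ℂ) • 1)⁻¹ * B) - frobSq F) := by
  set M : Matrix (Fin m) (Fin m) ℂ := A + (μ:ℂ) • 1 with hMdef
  set F₀ : Matrix (Fin m) (Fin n) ℂ := M⁻¹ * B with hF₀
  have hM : M.PosDef := posdef_shift hA hμ
  have hdet : IsUnit M.det := hM.det_pos.ne'.isUnit
  have h1 : M * F₀ = B := Matrix.mul_nonsing_inv_cancel_left M B hdet
  -- J_M decomposition: Fᴴ M F = Fᴴ A F + μ•(Fᴴ F)
  have hJM : ∀ G : Matrix (Fin m) (Fin n) ℂ,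
      ((Gᴴ * M * G).trace).re = ((Gᴴ * A * G).trace).re + μ * frobSq G := by
    intro G
    have : Gᴴ * M * G = Gᴴ * A * G + (μ:ℂ) • (Gᴴ * G) := by
      rw [hMdef]
      rw [Matrix.mul_add, Matrix.add_mul, Matrix.mul_smul, Matrix.mul_one, Matrix.smul_mul]
    rw [this, Matrix.trace_add, Complex.add_re, Matrix.trace_smul, frobSq_eq_retrace,
      smul_eq_mul]
    simp [Complex.mul_re]
  -- expansion of the quadratic
  have h2 : F₀ᴴ * M = Bᴴ := by
    rw [show F₀ᴴ * M = (Mᴴ * F₀)ᴴ by simp [Matrix.conjTranspose_mul], hM.isHermitian.eq, h1]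
  have hexp : (F - F₀)ᴴ * M * (F - F₀)
      = Fᴴ * M * F - Fᴴ * B - (Bᴴ * F - Bᴴ * F₀) := by
    rw [Matrix.conjTranspose_sub, Matrix.sub_mul, Matrix.sub_mul, Matrix.mul_sub, Matrix.mul_sub, h2]
    rw [Matrix.mul_assoc Fᴴ M F₀, h1]
  have hexp' : (((F - F₀)ᴴ * M * (F - F₀)).trace).re
      = ((Fᴴ * M * F).trace).re - ((Fᴴ * B).trace).re - ((Bᴴ * F).trace).re
        + ((Bᴴ * F₀).trace).re := by
    rw [hexp]
    simp only [Matrix.trace_sub, Complex.sub_re]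
    ring
  have h3 : ((Bᴴ * F).trace).re = ((Fᴴ * B).trace).re := re_trace_conjT F B
  have h4 : ((Bᴴ * F₀).trace).re = ((F₀ᴴ * B).trace).re := re_trace_conjT F₀ B
  have h5 : ((F₀ᴴ * M * F₀).trace).re = ((F₀ᴴ * B).trace).re := by
    rw [Matrix.mul_assoc, h1]
  have hJF := hJM F
  have hJF₀ := hJM F₀
  rw [hexp', h3, h4] at *
  -- now pure real arithmetic
  have e1 : ((Fᴴ * A * F).trace).re = ((Fᴴ * M * F).trace).re - μ * frobSq F := by linarith
  have e2 : ((F₀ᴴ * A * F₀).trace).re = ((F₀ᴴ * B).trace).re - μ * frobSq F₀ := by linarith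
  rw [e1, e2]
  ring

lemma frobSq_continuous {m n : ℕ} : Continuous (fun X : Matrix (Fin m) (Fin n) ℂ => frobSq X) := by
  unfold frobSq
  refine continuous_finset_sum _ fun i _ => continuous_finset_sum _ fun j _ => ?_
  exact Complex.continuous_normSq.comp ((continuous_apply j).comp (continuous_apply i))

lemma g_contAt {m n : ℕ} (A : Matrix (Fin m) (Fin m) ℂ) (B : Matrix (Fin m) (Fin n) ℂ) {μ : ℝ}
    (hdet : (A + (μ:ℂ) • (1 : Matrix (Fin m) (Fin m) ℂ)).det ≠ 0) :
    ContinuousAt (fun t : ℝ => frobSq ((A + (t:ℂ) • (1 : Matrix (Fin m) (Fin m) ℂ))⁻¹ * B)) μ := by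
  have hMc : Continuous (fun t : ℝ => A + (t:ℂ) • (1 : Matrix (Fin m) (Fin m) ℂ)) :=
    continuous_const.add (Complex.continuous_ofReal.smul continuous_const)
  have hinvdet : ContinuousAt (fun t : ℝ => ((A + (t:ℂ) • (1 : Matrix (Fin m) (Fin m) ℂ)).det)⁻¹) μ :=
    ContinuousAt.inv₀ hMc.matrix_det.continuousAt hdet
  have hinv : ContinuousAt (fun t : ℝ => (A + (t:ℂ) • (1 : Matrix (Fin m) (Fin m) ℂ))⁻¹) μ := by
    simp only [Matrix.inv_def, Ring.inverse_eq_inv']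
    exact hinvdet.smul hMc.matrix_adjugate.continuousAt
  have hmulB : Continuous (fun X : Matrix (Fin m) (Fin m) ℂ => X * B) :=
    continuous_id.matrix_mul continuous_const
  exact frobSq_continuous.continuousAt.comp ((hmulB.continuousAt).comp hinv)

lemma col_bound {m : ℕ} {A : Matrix (Fin m) (Fin m) ℂ} (hA : A.PosDef) {μ : ℝ} (hμ : 0 < μ)
    (x b : Fin m → ℂ) (hxb : (A + (μ:ℂ) • (1 : Matrix (Fin m) (Fin m) ℂ)) *ᵥ x = b) :
    ∑ i, Complex.normSq (x i) ≤ (∑ i, Complex.normSq (b i)) / μ ^ 2 := by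
  set Sx := ∑ i, Complex.normSq (x i) with hSx
  set Sb := ∑ i, Complex.normSq (b i) with hSb
  have hb : b = A *ᵥ x + (μ:ℂ) • x := by
    rw [← hxb, Matrix.add_mulVec, Matrix.smul_mulVec, Matrix.one_mulVec]
  have hdotself : (star x ⬝ᵥ x).re = Sx := by
    simp only [dotProduct, Pi.star_apply, Complex.re_sum, RCLike.star_def, hSx]
    congr 1; ext i
    rw [mul_comm, Complex.mul_conj, Complex.ofReal_re]
  have hlow : μ * Sx ≤ (star x ⬝ᵥ b).re := by
    rw [hb, dotProduct_add]
    have : star x ⬝ᵥ ((μ:ℂ) • x) = (μ:ℂ) * (star x ⬝ᵥ x) := by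
      simp [dotProduct, Finset.mul_sum]; congr 1; ext i; ring
    rw [this, Complex.add_re, Complex.mul_re]
    have h1 := hA.posSemidef.re_dotProduct_nonneg x
    simp only [Complex.ofReal_re, Complex.ofReal_im, zero_mul, sub_zero, hdotself]
    exact le_add_of_nonneg_left h1
  have hup : (star x ⬝ᵥ b).re ≤ μ / 2 * Sx + 1 / (2 * μ) * Sb := by
    rw [dotProduct, Complex.re_sum, hSx, hSb, Finset.mul_sum, Finset.mul_sum, ← Finset.sum_add_distrib]
    refine Finset.sum_le_sum fun i _ => ?_
    have h1 : (star x i * b i).re ≤ ‖x i‖ * ‖b i‖ := by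
      calc (star x i * b i).re ≤ ‖star x i * b i‖ := Complex.re_le_norm _
        _ = ‖x i‖ * ‖b i‖ := by
            rw [Pi.star_apply, norm_mul, RCLike.star_def, Complex.norm_conj]
    refine h1.trans ?_
    rw [Complex.normSq_eq_norm_sq, Complex.normSq_eq_norm_sq]
    have h2μ : (0:ℝ) < 2*μ := by linarith
    rw [show μ/2 * ‖x i‖^2 + 1/(2*μ) * ‖b i‖^2
        = (μ^2 * ‖x i‖^2 + ‖b i‖^2)/(2*μ) from by field_simp,
      le_div_iff₀ h2μ]
    nlinarith [sq_nonneg (μ * ‖x i‖ - ‖b i‖)]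
  have hSxnn : 0 ≤ Sx := Finset.sum_nonneg fun i _ => Complex.normSq_nonneg _
  have hSbnn : 0 ≤ Sb := Finset.sum_nonneg fun i _ => Complex.normSq_nonneg _
  have h5 : μ^2 * Sx ≤ Sb := by
    have h3 : μ/2 * Sx ≤ 1/(2*μ) * Sb := by linarith [le_trans hlow hup]
    calc μ^2*Sx = 2*μ*(μ/2*Sx) := by ring
      _ ≤ 2*μ*(1/(2*μ)*Sb) := mul_le_mul_of_nonneg_left h3 (by linarith)
      _ = Sb := by field_simp
  rw [le_div_iff₀ (by positivity : (0:ℝ) < μ^2)]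
  linarith

lemma g_bound {m n : ℕ} {A : Matrix (Fin m) (Fin m) ℂ} (hA : A.PosDef)
    (B : Matrix (Fin m) (Fin n) ℂ) {μ : ℝ} (hμ : 0 < μ) :
    frobSq ((A + (μ:ℂ) • (1 : Matrix (Fin m) (Fin m) ℂ))⁻¹ * B) ≤ frobSq B / μ ^ 2 := by
  set M : Matrix (Fin m) (Fin m) ℂ := A + (μ:ℂ) • 1 with hMdef
  have hM : M.PosDef := posdef_shift hA hμ.le
  have hdet : IsUnit M.det := hM.det_pos.ne'.isUnit
  have hMX : M * (M⁻¹ * B) = B := Matrix.mul_nonsing_inv_cancel_left M B hdet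
  have hswap : ∀ (X : Matrix (Fin m) (Fin n) ℂ), frobSq X = ∑ j, ∑ i, Complex.normSq (X i j) := by
    intro X; rw [frobSq, Finset.sum_comm]
  rw [hswap, hswap, Finset.sum_div]
  refine Finset.sum_le_sum fun j _ => ?_
  refine col_bound hA hμ (fun i => (M⁻¹ * B) i j) (fun i => B i j) ?_
  funext i
  have := congrFun (congrFun hMX i) j
  simpa [hMdef, Matrix.mul_apply, Matrix.mulVec, dotProduct] using this

/-- Minimizing `J(F) = tr(F* A F) − 2 Re tr(F* B)` subject to `‖F‖_F² ≤ ρ`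
(`A` Hermitian positive definite): if `‖A⁻¹B‖_F² ≤ ρ` then `F = A⁻¹B` is the
global minimizer; otherwise the minimizer is `F = (A + μI)⁻¹B` for the unique
`μ > 0` with `‖(A+μI)⁻¹B‖_F² = ρ`. -/
theorem mmse_precoder_power_constraint (MM S : ℕ)
    (A : Matrix (Fin MM) (Fin MM) ℂ) (hA : A.PosDef)
    (B : Matrix (Fin MM) (Fin S) ℂ) (ρ : ℝ) (hρ : 0 < ρ) :
    letI J : Matrix (Fin MM) (Fin S) ℂ → ℝ := fun F =>
      ((Fᴴ * A * F).trace).re - 2 * ((Fᴴ * B).trace).re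
    (frobSq (A⁻¹ * B) ≤ ρ →
      ∀ F, frobSq F ≤ ρ → J (A⁻¹ * B) ≤ J F) ∧
    (ρ < frobSq (A⁻¹ * B) →
      (∃! μ : ℝ, 0 < μ ∧
        frobSq ((A + (μ : ℂ) • (1 : Matrix (Fin MM) (Fin MM) ℂ))⁻¹ * B) = ρ) ∧
      ∀ μ : ℝ, 0 < μ →
        frobSq ((A + (μ : ℂ) • (1 : Matrix (Fin MM) (Fin MM) ℂ))⁻¹ * B) = ρ →
        ∀ F, frobSq F ≤ ρ →
          J ((A + (μ : ℂ) • (1 : Matrix (Fin MM) (Fin MM) ℂ))⁻¹ * B) ≤ J F) := by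
  have hA0 : A + ((0:ℝ):ℂ) • (1 : Matrix (Fin MM) (Fin MM) ℂ) = A := by
    norm_num
  set g : ℝ → ℝ := fun t => frobSq ((A + (t:ℂ) • (1 : Matrix (Fin MM) (Fin MM) ℂ))⁻¹ * B)
    with hgdef
  constructor
  · -- Part 1
    intro _ F _
    have hc := core_identity hA B (le_refl (0:ℝ)) F
    rw [hA0] at hc
    have hnn := retrace_nonneg hA.posSemidef (F - A⁻¹ * B)
    dsimp only
    nlinarith
  · -- Part 2
    intro hbig
    have hg0 : g 0 = frobSq (A⁻¹ * B) := by rw [hgdef]; simp only; rw [hA0]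
    have huniq : ∀ μ₁ μ₂ : ℝ, 0 < μ₁ → 0 < μ₂ → g μ₁ = ρ → g μ₂ = ρ → μ₁ = μ₂ := by
      intro μ₁ μ₂ hμ₁ hμ₂ he₁ he₂
      set M₁ : Matrix (Fin MM) (Fin MM) ℂ := A + (μ₁:ℂ) • 1 with hM₁
      set M₂ : Matrix (Fin MM) (Fin MM) ℂ := A + (μ₂:ℂ) • 1 with hM₂
      set F₁ : Matrix (Fin MM) (Fin S) ℂ := M₁⁻¹ * B with hF₁
      set F₂ : Matrix (Fin MM) (Fin S) ℂ := M₂⁻¹ * B with hF₂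
      have hc₁ := core_identity hA B hμ₂.le F₁
      have hc₂ := core_identity hA B hμ₁.le F₂
      have hfr₁ : frobSq F₁ = ρ := he₁
      have hfr₂ : frobSq F₂ = ρ := he₂
      rw [← hM₂, ← hF₂, hfr₁, hfr₂] at hc₁
      rw [← hM₁, ← hF₁, hfr₁, hfr₂] at hc₂
      have hR₂ := retrace_nonneg (posdef_shift hA hμ₂.le).posSemidef (F₁ - F₂)
      have hR₁ := retrace_nonneg (posdef_shift hA hμ₁.le).posSemidef (F₂ - F₁)
      rw [← hM₂] at hR₂
      rw [← hM₁] at hR₁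
      have hR₂0 : (((F₁ - F₂)ᴴ * M₂ * (F₁ - F₂)).trace).re = 0 := by nlinarith
      have hF12 : F₁ = F₂ := by
        have := retrace_eq_zero (by rw [hM₂]; exact posdef_shift hA hμ₂.le) (F₁ - F₂) hR₂0
        exact sub_eq_zero.1 this
      by_contra hne
      have hd₁ : IsUnit M₁.det := (by rw [hM₁]; exact posdef_shift hA hμ₁.le : M₁.PosDef).det_pos.ne'.isUnit
      have hd₂ : IsUnit M₂.det := (by rw [hM₂]; exact posdef_shift hA hμ₂.le : M₂.PosDef).det_pos.ne'.isUnit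
      have hB₁ : M₁ * F₁ = B := Matrix.mul_nonsing_inv_cancel_left M₁ B hd₁
      have hB₂ : M₂ * F₂ = B := Matrix.mul_nonsing_inv_cancel_left M₂ B hd₂
      have hzero : ((μ₁ - μ₂ : ℝ):ℂ) • F₁ = 0 := by
        have h1 : (M₁ - M₂) * F₁ = 0 := by
          rw [Matrix.sub_mul, hB₁, hF₁] at *
          rw [hF12, hB₂, sub_self]
        have h2 : M₁ - M₂ = ((μ₁ - μ₂ : ℝ):ℂ) • (1 : Matrix (Fin MM) (Fin MM) ℂ) := by
          rw [hM₁, hM₂]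
          push_cast
          rw [sub_smul]
          abel
        rw [h2, Matrix.smul_mul, Matrix.one_mul] at h1
        exact h1
      have hsc : ((μ₁ - μ₂ : ℝ):ℂ) ≠ 0 := by
        simp only [ne_eq, Complex.ofReal_eq_zero, sub_eq_zero]
        exact hne
      have hF₁0 : F₁ = 0 := by
        rcases smul_eq_zero.1 hzero with h | h
        · exact absurd h hsc
        · exact h
      rw [hF₁0] at hfr₁
      simp [frobSq] at hfr₁
      exact absurd hfr₁.symm hρ.ne'
    constructor
    · -- existence and uniqueness of μ
      set μ₀ : ℝ := Real.sqrt (frobSq B / ρ) + 1 with hμ₀def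
      have hfbnn : 0 ≤ frobSq B := Finset.sum_nonneg fun i _ =>
        Finset.sum_nonneg fun j _ => Complex.normSq_nonneg _
      have hcnn : 0 ≤ frobSq B / ρ := div_nonneg hfbnn hρ.le
      have hμ₀pos : 0 < μ₀ := by positivity
      have hμ₀sq : frobSq B / ρ < μ₀ ^ 2 := by
        rw [hμ₀def]
        nlinarith [Real.sq_sqrt hcnn, Real.sqrt_nonneg (frobSq B / ρ)]
      have hgμ₀ : g μ₀ < ρ := by
        refine lt_of_le_of_lt (g_bound hA B hμ₀pos) ?_
        rw [div_lt_iff₀ (by positivity)]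
        rw [div_lt_iff₀ hρ] at hμ₀sq
        linarith
      have hcont : ContinuousOn g (Set.Icc 0 μ₀) := fun t ht =>
        (g_contAt A B (posdef_shift hA ht.1).det_pos.ne').continuousWithinAt
      have hsub := intermediate_value_Icc' hμ₀pos.le hcont
      have hmem : ρ ∈ Set.Icc (g μ₀) (g 0) := ⟨hgμ₀.le, by rw [hg0]; exact hbig.le⟩
      obtain ⟨μs, hμsmem, hμseq⟩ := hsub hmem
      have hμspos : 0 < μs := by
        rcases lt_or_eq_of_le hμsmem.1 with h | h
        · exact h
        · exfalso; rw [← h] at hμseq; rw [hg0] at hμseq; exact absurd hμseq (ne_of_gt hbig)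
      refine ⟨μs, ⟨hμspos, hμseq⟩, ?_⟩
      intro μ' ⟨hμ'pos, hμ'eq⟩
      exact huniq μ' μs hμ'pos hμspos hμ'eq hμseq
    · -- minimization
      intro μ hμ hgμ F hF
      have hc := core_identity hA B hμ.le F
      have hnn := retrace_nonneg (posdef_shift hA hμ.le).posSemidef
        (F - (A + (μ:ℂ) • 1)⁻¹ * B)
      dsimp only
      have hfr : frobSq ((A + (μ:ℂ) • (1 : Matrix (Fin MM) (Fin MM) ℂ))⁻¹ * B) = ρ := hgμ
      rw [hfr] at hc
      nlinarith
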